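/- Let (R, m) be a commutative Noetherian local ring of prime characteristic p, I an ideal of R, x ∈ I, and x₂, …, x_d ∈ R such that x, x₂, …, x_d is a regular sequence on R; set J = (x, x₂, …, x_d)R. Let z ∈ R with z ∉ I + (x₂, …, x_d)R, and let u ∈ I with u − x·z ∈ J·I. Assume that for every w ∈ R and every e ≥ 0, w^{p^e} ∈ I + (x₂^{p^e}, …, x_d^{p^e})R implies w ∈ I + (x₂, …, x_d)R. Then for every e ≥ 0, writing q = p^e, one has u^q ∉ (x^q, x₂^q, …, x_d^q)·I. -/

import Mathlib

open RingTheory.Sequence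

section Aux

variable {R : Type*} [CommRing R]

private lemma st12_isSMulRegular_quot_iff (K : Ideal R) (r : R) :
    IsSMulRegular (R ⧸ (K • (⊤ : Submodule R R))) r ↔ ∀ w, r * w ∈ K → w ∈ K := by
  have hK : (K • (⊤ : Submodule R R)) = K := by
    rw [smul_eq_mul, Ideal.mul_top]
  constructor
  · intro h w hw
    have h0 : r • (Submodule.Quotient.mk w : R ⧸ (K • (⊤ : Submodule R R))) = r • 0 := by
      rw [smul_zero, ← Submodule.Quotient.mk_smul, Submodule.Quotient.mk_eq_zero,
        hK, smul_eq_mul]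
      exact hw
    have := h h0
    rwa [Submodule.Quotient.mk_eq_zero, hK] at this
  · intro h a b hab
    obtain ⟨wa, rfl⟩ := Submodule.Quotient.mk_surjective _ a
    obtain ⟨wb, rfl⟩ := Submodule.Quotient.mk_surjective _ b
    have hab' : (Submodule.Quotient.mk (r • wa) : R ⧸ (K • (⊤ : Submodule R R))) =
        Submodule.Quotient.mk (r • wb) := by
      rw [Submodule.Quotient.mk_smul, Submodule.Quotient.mk_smul]; exact hab
    rw [Submodule.Quotient.eq, hK] at hab'
    rw [Submodule.Quotient.eq, hK]
    exact h _ (by rw [mul_sub]; simpa [smul_eq_mul] using hab')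

private lemma st12_isWeaklyRegular_iff_elem (l : List R) :
    IsWeaklyRegular R l ↔
      ∀ i (h : i < l.length) (w : R),
        l[i] * w ∈ Ideal.ofList (l.take i) → w ∈ Ideal.ofList (l.take i) := by
  rw [RingTheory.Sequence.isWeaklyRegular_iff]
  exact forall_congr' fun i => forall_congr' fun h => st12_isSMulRegular_quot_iff _ _

private lemma st12_wr_take {l : List R} (h : IsWeaklyRegular R l) (n : ℕ) :
    IsWeaklyRegular R (l.take n) := by
  rw [st12_isWeaklyRegular_iff_elem] at h ⊢
  intro i hi w
  have hi' : i < l.length := lt_of_lt_of_le hi (by simp [List.length_take])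
  have h1 : (l.take n)[i] = l[i] := List.getElem_take ..
  have h2 : (l.take n).take i = l.take i := by
    rw [List.take_take, min_eq_left]
    exact le_of_lt (lt_of_lt_of_le hi (by simp [List.length_take]))
  rw [h1, h2]
  exact h i hi' w

private lemma st12_nzd_last {l : List R} {a : R} (h : IsWeaklyRegular R (l ++ [a])) :
    ∀ w, a * w ∈ Ideal.ofList l → w ∈ Ideal.ofList l := by
  rw [st12_isWeaklyRegular_iff_elem] at h
  intro w
  have hlen : l.length < (l ++ [a]).length := by simp
  have h1 : (l ++ [a])[l.length] = a := by simp
  have h2 : (l ++ [a]).take l.length = l := by simp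
  have := h l.length hlen w
  rwa [h1, h2] at this

variable [IsNoetherianRing R] [IsLocalRing R]

private lemma st12_head_nzd_mod {a : R} {l : List R}
    (h : IsWeaklyRegular R (a :: l))
    (hm : ∀ r ∈ a :: l, r ∈ IsLocalRing.maximalIdeal R) :
    ∀ w, a * w ∈ Ideal.ofList l → w ∈ Ideal.ofList l := by
  have hperm : (a :: l).Perm (l ++ [a]) := (List.perm_append_singleton a l).symm
  exact st12_nzd_last
    (IsLocalRing.isWeaklyRegular_of_perm_of_subset_maximalIdeal h hperm hm)

private lemma st12_mul_head {a b : R} {t : List R}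
    (hm : ∀ r ∈ a :: b :: t, r ∈ IsLocalRing.maximalIdeal R)
    (ha : IsWeaklyRegular R (a :: t)) (hb : IsWeaklyRegular R (b :: t)) :
    IsWeaklyRegular R ((a * b) :: t) := by
  have ha' := (st12_isWeaklyRegular_iff_elem _).mp ha
  have hb' := (st12_isWeaklyRegular_iff_elem _).mp hb
  rw [st12_isWeaklyRegular_iff_elem]
  intro i hi w
  match i with
  | 0 =>
    intro hw
    simp only [List.take_zero, Ideal.ofList_nil, Submodule.mem_bot] at hw ⊢
    have h1 := ha' 0 (by simp) (b * w)
    simp only [List.take_zero, Ideal.ofList_nil, Submodule.mem_bot,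
      List.getElem_cons_zero] at h1
    have h2 := hb' 0 (by simp) w
    simp only [List.take_zero, Ideal.ofList_nil, Submodule.mem_bot,
      List.getElem_cons_zero] at h2
    exact h2 (h1 (by rw [← mul_assoc]; exact hw))
  | (i+1) =>
    simp only [List.getElem_cons_succ, List.take_succ_cons, Ideal.ofList_cons]
    have hi' : i < t.length := by simpa using hi
    set T := Ideal.ofList (t.take i) with hT
    intro hw
    have hsubA : Ideal.span {a * b} ≤ Ideal.span ({a} : Set R) := by
      rw [Ideal.span_singleton_le_span_singleton]; exact Dvd.intro b rfl
    have hwa : t[i] * w ∈ Ideal.span {a} ⊔ T :=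
      sup_le_sup_left (le_refl T) _ (Submodule.mem_sup.mpr (by
        obtain ⟨y, hy, z, hz, hyz⟩ := Submodule.mem_sup.mp hw
        exact ⟨y, hsubA hy, z, hz, hyz⟩))
    have haw := ha' (i+1) (by simpa using hi') w
    simp only [List.getElem_cons_succ, List.take_succ_cons, Ideal.ofList_cons] at haw
    have hw2 := haw (by rwa [← hT])
    obtain ⟨y, hy, t'', ht'', hw3⟩ := Submodule.mem_sup.mp hw2
    obtain ⟨w', rfl⟩ := Ideal.mem_span_singleton'.mp hy
    obtain ⟨y2, hy2, t0, ht0, hw4⟩ := Submodule.mem_sup.mp hw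
    obtain ⟨c, rfl⟩ := Ideal.mem_span_singleton'.mp hy2
    have key : a * (t[i] * w' - b * c) ∈ T := by
      have e2 : a * (t[i] * w' - b * c) = t0 - t[i] * t'' := by
        linear_combination (t[i]) * hw3 - hw4
      rw [e2]
      exact sub_mem ht0 (T.mul_mem_left _ ht'')
    have hanzd : t[i] * w' - b * c ∈ T := by
      have hpre : IsWeaklyRegular R (a :: t.take i) := by
        have := st12_wr_take ha (i + 1)
        simpa using this
      refine st12_head_nzd_mod hpre ?_ _ key
      intro r hr
      rcases List.mem_cons.mp hr with rfl | hr
      · exact hm r (by simp)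
      · exact hm r (List.mem_cons_of_mem a (List.mem_cons_of_mem b (List.mem_of_mem_take hr)))
    have hwb : t[i] * w' ∈ Ideal.span {b} ⊔ T := by
      refine Submodule.mem_sup.mpr ⟨c * b, Ideal.mem_span_singleton'.mpr ⟨c, rfl⟩,
        t[i] * w' - b * c, hanzd, by ring⟩
    have hbw := hb' (i+1) (by simpa using hi') w'
    simp only [List.getElem_cons_succ, List.take_succ_cons, Ideal.ofList_cons] at hbw
    obtain ⟨y3, hy3, t3, ht3, hw5⟩ := Submodule.mem_sup.mp (hbw (by rwa [← hT]))
    obtain ⟨c3, rfl⟩ := Ideal.mem_span_singleton'.mp hy3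
    refine Submodule.mem_sup.mpr ⟨c3 * (a * b), Ideal.mem_span_singleton'.mpr ⟨c3, rfl⟩,
      t3 * a + t'', add_mem (T.mul_mem_right a ht3) ht'', ?_⟩
    linear_combination a * hw5 + hw3

private lemma st12_pow_head {a : R} {t : List R} (n : ℕ)
    (hm : ∀ r ∈ a :: t, r ∈ IsLocalRing.maximalIdeal R)
    (ha : IsWeaklyRegular R (a :: t)) :
    IsWeaklyRegular R (a ^ (n + 1) :: t) := by
  induction n with
  | zero => simpa using ha
  | succ n ih =>
    have hm' : ∀ r ∈ a :: a ^ (n + 1) :: t, r ∈ IsLocalRing.maximalIdeal R := by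
      intro r hr
      rcases List.mem_cons.mp hr with rfl | hr
      · exact hm r (by simp)
      rcases List.mem_cons.mp hr with rfl | hr
      · exact Ideal.pow_mem_of_mem _ (hm a (by simp)) _ (Nat.succ_pos n)
      · exact hm r (List.mem_cons_of_mem a hr)
    have := st12_mul_head hm' ha ih
    rwa [← pow_succ'] at this

private lemma st12_pow_all {l : List R} (n : ℕ)
    (hm : ∀ r ∈ l, r ∈ IsLocalRing.maximalIdeal R)
    (h : IsWeaklyRegular R l) :
    IsWeaklyRegular R (l.map (· ^ (n + 1))) := by
  suffices H : ∀ j ≤ l.length,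
      IsWeaklyRegular R ((l.take j).map (· ^ (n + 1)) ++ l.drop j) by
    have := H l.length le_rfl
    simpa using this
  intro j hj
  induction j with
  | zero => simpa using h
  | succ j ih =>
    have hj' : j < l.length := hj
    have ihr := ih (le_of_lt hj')
    set A := (l.take j).map (· ^ (n + 1)) with hA
    have hmem : ∀ r ∈ A ++ l.drop j, r ∈ IsLocalRing.maximalIdeal R := by
      intro r hr
      rcases List.mem_append.mp hr with hr | hr
      · obtain ⟨s, hs, rfl⟩ := List.mem_map.mp hr
        exact Ideal.pow_mem_of_mem _ (hm s (List.mem_of_mem_take hs)) _ (Nat.succ_pos n)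
      · exact hm r (List.mem_of_mem_drop hr)
    have hdrop : l.drop j = l[j] :: l.drop (j + 1) := List.drop_eq_getElem_cons hj'
    rw [hdrop] at ihr hmem
    have hperm1 : (A ++ l[j] :: l.drop (j + 1)).Perm (l[j] :: (A ++ l.drop (j + 1))) :=
      List.perm_middle
    have h1 : IsWeaklyRegular R (l[j] :: (A ++ l.drop (j + 1))) :=
      IsLocalRing.isWeaklyRegular_of_perm_of_subset_maximalIdeal ihr hperm1 hmem
    have hmem1 : ∀ r ∈ l[j] :: (A ++ l.drop (j + 1)), r ∈ IsLocalRing.maximalIdeal R := by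
      intro r hr
      exact hmem r (hperm1.symm.subset hr)
    have h2 : IsWeaklyRegular R (l[j] ^ (n + 1) :: (A ++ l.drop (j + 1))) :=
      st12_pow_head n hmem1 h1
    have hmem2 : ∀ r ∈ l[j] ^ (n + 1) :: (A ++ l.drop (j + 1)),
        r ∈ IsLocalRing.maximalIdeal R := by
      intro r hr
      rcases List.mem_cons.mp hr with rfl | hr
      · exact Ideal.pow_mem_of_mem _ (hm _ (List.getElem_mem hj')) _ (Nat.succ_pos n)
      · exact hmem1 r (List.mem_cons_of_mem _ hr)
    have hperm2 : (l[j] ^ (n + 1) :: (A ++ l.drop (j + 1))).Perm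
        (A ++ l[j] ^ (n + 1) :: l.drop (j + 1)) := List.perm_middle.symm
    have h3 : IsWeaklyRegular R (A ++ l[j] ^ (n + 1) :: l.drop (j + 1)) :=
      IsLocalRing.isWeaklyRegular_of_perm_of_subset_maximalIdeal h2 hperm2 hmem2
    have htake : (l.take (j + 1)).map (· ^ (n + 1)) = A ++ [l[j] ^ (n + 1)] := by
      have : l.take (j + 1) = l.take j ++ [l[j]] := by
        rw [List.take_succ, List.getElem?_eq_getElem hj']
        rfl
      rw [this, List.map_append, hA]
      rfl
    rw [htake, List.append_assoc, List.singleton_append]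
    exact h3

private lemma st12_ofList_ofFn {d : ℕ} (f : Fin d → R) :
    Ideal.ofList (List.ofFn f) = Ideal.span (Set.range f) := by
  unfold Ideal.ofList
  congr 1
  ext r
  simp [List.mem_ofFn]

/-- The key regularity consequence: `x^q` is a nonzerodivisor modulo
`(x₂^q, …, x_d^q)`. -/
private lemma st12_key {x : R} {d : ℕ} {x' : Fin d → R}
    (hreg : IsRegular R (x :: List.ofFn x')) (n : ℕ) :
    ∀ w : R, x ^ (n + 1) * w ∈ Ideal.span (Set.range fun i => x' i ^ (n + 1)) →
      w ∈ Ideal.span (Set.range fun i => x' i ^ (n + 1)) := by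
  set ys := List.ofFn x' with hys
  have hproper : Ideal.ofList (x :: ys) ≠ ⊤ := fun hcon =>
    hreg.top_ne_smul (by rw [smul_eq_mul, Ideal.mul_top, hcon])
  have hm : ∀ r ∈ x :: ys, r ∈ IsLocalRing.maximalIdeal R := fun r hr =>
    IsLocalRing.le_maximalIdeal hproper (Ideal.subset_span hr)
  have hWR : IsWeaklyRegular R (x :: ys) := hreg.toIsWeaklyRegular
  have hpow : IsWeaklyRegular R (x ^ (n + 1) :: ys.map (· ^ (n + 1))) := by
    have := st12_pow_all n hm hWR
    rwa [List.map_cons] at this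
  have hmemp : ∀ r ∈ x ^ (n + 1) :: ys.map (· ^ (n + 1)),
      r ∈ IsLocalRing.maximalIdeal R := by
    intro r hr
    rcases List.mem_cons.mp hr with rfl | hr
    · exact Ideal.pow_mem_of_mem _ (hm x (by simp)) _ (Nat.succ_pos n)
    · obtain ⟨s, hs, rfl⟩ := List.mem_map.mp hr
      exact Ideal.pow_mem_of_mem _ (hm s (List.mem_cons_of_mem x hs)) _ (Nat.succ_pos n)
  have hperm : (x ^ (n + 1) :: ys.map (· ^ (n + 1))).Perm
      (ys.map (· ^ (n + 1)) ++ [x ^ (n + 1)]) :=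
    (List.perm_append_singleton _ _).symm
  have hfinal : IsWeaklyRegular R (ys.map (· ^ (n + 1)) ++ [x ^ (n + 1)]) :=
    IsLocalRing.isWeaklyRegular_of_perm_of_subset_maximalIdeal hpow hperm hmemp
  have hlist : ys.map (· ^ (n + 1)) = List.ofFn (fun i => x' i ^ (n + 1)) := by
    rw [hys, List.map_ofFn]
    rfl
  have := st12_nzd_last hfinal
  rwa [hlist, st12_ofList_ofFn] at this

private lemma st12_frob_span (p : ℕ) [hfact : Fact p.Prime] [CharP R p] (e : ℕ)
    {S : Set R} {a : R} (ha : a ∈ Ideal.span S) :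
    a ^ p ^ e ∈ Ideal.span ((· ^ p ^ e) '' S) := by
  have hq : p ^ e ≠ 0 := pow_ne_zero e hfact.out.ne_zero
  induction ha using Submodule.span_induction with
  | mem w hw => exact Ideal.subset_span ⟨w, hw, rfl⟩
  | zero => rw [zero_pow hq]; exact zero_mem _
  | add w v _ _ ihw ihv => rw [add_pow_char_pow]; exact add_mem ihw ihv
  | smul c w _ ihw =>
    rw [smul_eq_mul, mul_pow]
    exact Ideal.mul_mem_left _ _ ihw

private lemma st12_frob_mul (p : ℕ) [hfact : Fact p.Prime] [CharP R p] (e : ℕ)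
    {S : Set R} {I : Ideal R} {v : R} (hv : v ∈ Ideal.span S * I) :
    v ^ p ^ e ∈ Ideal.span ((· ^ p ^ e) '' S) * I := by
  have hqpos : 0 < p ^ e := pow_pos hfact.out.pos e
  refine Submodule.mul_induction_on hv ?_ ?_
  · intro a ha b hb
    rw [mul_pow]
    exact Ideal.mul_mem_mul (st12_frob_span p e ha) (I.pow_mem_of_mem hb _ hqpos)
  · intro w v' hw hv'
    rw [add_pow_char_pow]
    exact add_mem hw hv'

end Aux

/-- With `J = (x, x₂, …, x_d)R`, `z ∉ I + (x₂, …, x_d)R`,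
`u ∈ I` with `u − x·z ∈ J·I`, and assuming the Frobenius-injectivity-type condition
(iv) on `R/I`, one has `u^q ∉ (x^q, x₂^q, …, x_d^q)·I` for every `q = p^e`. -/
theorem statement12 {R : Type*} [CommRing R] [IsNoetherianRing R] [IsLocalRing R]
    (p : ℕ) (hp : p.Prime) [CharP R p]
    (I : Ideal R) (x : R) (hxI : x ∈ I) {d : ℕ} (x' : Fin d → R)
    (hreg : RingTheory.Sequence.IsRegular R (x :: List.ofFn x'))
    (z : R) (hz : z ∉ I + Ideal.span (Set.range x'))
    (u : R) (hu : u ∈ I)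
    (huz : u - x * z ∈ Ideal.span ({x} ∪ Set.range x') * I)
    (hFinj : ∀ (w : R) (e : ℕ),
      w ^ p ^ e ∈ I + Ideal.span (Set.range fun i => x' i ^ p ^ e) →
      w ∈ I + Ideal.span (Set.range x')) :
    ∀ e : ℕ,
      u ^ p ^ e ∉ Ideal.span ({x ^ p ^ e} ∪ Set.range fun i => x' i ^ p ^ e) * I := by
  haveI : Fact p.Prime := ⟨hp⟩
  intro e hmem
  obtain ⟨n, hn⟩ : ∃ n, p ^ e = n + 1 :=
    ⟨p ^ e - 1, (Nat.succ_pred_eq_of_pos (pow_pos hp.pos e)).symm⟩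
  -- the image of the generating set under Frobenius
  have himg : (· ^ p ^ e) '' ({x} ∪ Set.range x') =
      {x ^ p ^ e} ∪ Set.range fun i => x' i ^ p ^ e := by
    rw [Set.image_union, Set.image_singleton, ← Set.range_comp]
    rfl
  have hv : (u - x * z) ^ p ^ e ∈
      Ideal.span ({x ^ p ^ e} ∪ Set.range fun i => x' i ^ p ^ e) * I := by
    have := st12_frob_mul p e huz
    rwa [himg] at this
  have hu2 : x ^ p ^ e * z ^ p ^ e = u ^ p ^ e - (u - x * z) ^ p ^ e := by
    have h1 : u ^ p ^ e = (x * z + (u - x * z)) ^ p ^ e := by rw [add_sub_cancel]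
    rw [h1, add_pow_char_pow, mul_pow]
    ring
  have hxz : x ^ p ^ e * z ^ p ^ e ∈
      Ideal.span ({x ^ p ^ e} ∪ Set.range fun i => x' i ^ p ^ e) * I := by
    rw [hu2]
    exact sub_mem hmem hv
  rw [Ideal.span_union, Submodule.sup_mul] at hxz
  obtain ⟨y1, hy1, y2, hy2, hsum⟩ := Submodule.mem_sup.mp hxz
  obtain ⟨c, hcI, hc⟩ := Ideal.mem_span_singleton_mul.mp hy1
  have hy2' : y2 ∈ Ideal.span (Set.range fun i => x' i ^ p ^ e) :=
    Ideal.mul_le_left hy2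
  have hxw : x ^ p ^ e * (z ^ p ^ e - c) ∈
      Ideal.span (Set.range fun i => x' i ^ p ^ e) := by
    have heq : x ^ p ^ e * (z ^ p ^ e - c) = y2 := by
      linear_combination -hsum - hc
    rw [heq]
    exact hy2'
  have hzc : z ^ p ^ e - c ∈ Ideal.span (Set.range fun i => x' i ^ p ^ e) := by
    have := st12_key hreg n
    rw [← hn] at this
    exact this _ hxw
  have hzmem : z ^ p ^ e ∈ I + Ideal.span (Set.range fun i => x' i ^ p ^ e) := by
    rw [Submodule.add_eq_sup]
    exact Submodule.mem_sup.mpr ⟨c, hcI, z ^ p ^ e - c, hzc, by ring⟩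
  exact hz (hFinj z e hzmem)
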